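/- (Theorem 1, Sobol' index formula) Let f^Ow be the multilinear extension of a capacity μ on N. For every nonempty subset S ⊆ N, the nonnormalized Sobol' index of S, namely the variance Var[f_S] = ∫_{[0,1]^S} f_S(z_S)^2 dz_S of the ANOVA component f_S of f^Ow, equals (1/3^{|S|}) · (μ̂(S))^2, where μ̂ is the Fourier transform of μ. -/

import Mathlib

open MeasureTheory Finset

/-- The uniform probability measure on the unit cube `[0,1]^n`. -/
noncomputable def unifCube (n : ℕ) : Measure (Fin n → ℝ) :=
  Measure.pi fun _ => volume.restrict (Set.Icc 0 1)

/-- The Möbius transform of a set function. -/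
noncomputable def mobius {n : ℕ} (ξ : Finset (Fin n) → ℝ) (S : Finset (Fin n)) : ℝ :=
  ∑ T ∈ S.powerset, (-1 : ℝ) ^ (S \ T).card * ξ T

/-- The Fourier transform of a set function. -/
noncomputable def fourierT {n : ℕ} (ξ : Finset (Fin n) → ℝ) (S : Finset (Fin n)) : ℝ :=
  (1 / 2 ^ n : ℝ) * ∑ T : Finset (Fin n), (-1 : ℝ) ^ (S ∩ T).card * ξ T

/-- The Banzhaf interaction transform of a set function. -/
noncomputable def banzhaf {n : ℕ} (ξ : Finset (Fin n) → ℝ) (S : Finset (Fin n)) : ℝ :=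
  (1 / 2 : ℝ) ^ (n - S.card) * ∑ K : Finset (Fin n), (-1 : ℝ) ^ (S \ K).card * ξ K

/-- The multilinear (Owen) extension associated with coefficients `m`. -/
noncomputable def fOw {n : ℕ} (m : Finset (Fin n) → ℝ) (x : Fin n → ℝ) : ℝ :=
  ∑ T : Finset (Fin n), m T * ∏ i ∈ T, x i

/-- A capacity: vanishes on the empty set and is monotone. -/
def Capacity {n : ℕ} (μ : Finset (Fin n) → ℝ) : Prop :=
  μ ∅ = 0 ∧ ∀ S T : Finset (Fin n), S ⊆ T → μ S ≤ μ T

/-- The ANOVA component of `f` associated with the subset `S`. -/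
noncomputable def anova {n : ℕ} (f : (Fin n → ℝ) → ℝ) (S : Finset (Fin n))
    (z : Fin n → ℝ) : ℝ :=
  ∑ T ∈ S.powerset, (-1 : ℝ) ^ (S \ T).card *
    ∫ y, f (fun i => if i ∈ T then z i else y i) ∂unifCube n

/-- The Choquet integral (Lovász extension) of a 2-additive capacity with
Möbius transform `m`. -/
noncomputable def fLo {n : ℕ} (m : Finset (Fin n) → ℝ) (z : Fin n → ℝ) : ℝ :=
  ∑ i, m {i} * z i +
    ∑ i, ∑ j ∈ Finset.univ.filter (fun j => i < j), m {i, j} * min (z i) (z j)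

def I01 : Type := ℝ
instance : MeasurableSpace I01 := inferInstanceAs (MeasurableSpace ℝ)
noncomputable instance : MeasureSpace I01 := ⟨(volume : Measure ℝ).restrict (Set.Icc 0 1)⟩
instance : IsProbabilityMeasure (volume : Measure I01) := by
  constructor
  show (volume : Measure ℝ).restrict (Set.Icc 0 1) Set.univ = 1
  simp [Real.volume_Icc]
instance : SigmaFinite (volume : Measure I01) := inferInstance

lemma int_id : ∫ x in Set.Icc (0:ℝ) 1, x = 1/2 := by
  rw [integral_Icc_eq_integral_Ioc, ← intervalIntegral.integral_of_le (by norm_num : (0:ℝ) ≤ 1)]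
  rw [integral_id]; norm_num

lemma int_sq : ∫ x in Set.Icc (0:ℝ) 1, (x - 1/2)^2 = 1/12 := by
  rw [integral_Icc_eq_integral_Ioc, ← intervalIntegral.integral_of_le (by norm_num : (0:ℝ) ≤ 1)]
  rw [show (fun x : ℝ => (x - 1/2)^2) = (fun x : ℝ => ((fun t => t^2) (x - 1/2))) from rfl]
  rw [intervalIntegral.integral_comp_sub_right (fun t : ℝ => t^2) (1/2)]
  rw [integral_pow]; norm_num

lemma cont_integrable (f : ℝ → ℝ) (hf : Continuous f) : Integrable (fun x : I01 => f x) := by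
  show IntegrableOn f (Set.Icc 0 1) volume
  exact hf.integrableOn_Icc

lemma prod_ite_pow {n : ℕ} (U A : Finset (Fin n)) (c : ℝ) :
    ∏ i ∈ U, (if i ∈ A then c else 1) = c ^ (U ∩ A).card := by
  rw [← Finset.filter_mem_eq_inter, ← Finset.prod_const (b := c), Finset.prod_filter]

lemma prod_ite_pow' {n : ℕ} (U A : Finset (Fin n)) (c : ℝ) :
    ∏ i ∈ U, (if i ∈ A then 1 else c) = c ^ (U \ A).card := by
  have : ∀ i, (if i ∈ A then (1:ℝ) else c) = if i ∉ A then c else 1 := by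
    intro i; by_cases h : i ∈ A <;> simp [h]
  rw [Finset.prod_congr rfl (fun i _ => this i), Finset.sdiff_eq_filter,
    ← Finset.prod_const (b := c), Finset.prod_filter]

lemma card_split {n : ℕ} {S T : Finset (Fin n)} (U : Finset (Fin n)) (hT : T ⊆ S) :
    (U \ T).card = (U \ S).card + ((S \ T) ∩ U).card := by
  rw [← Finset.card_union_of_disjoint (by
    rw [Finset.disjoint_left]; intro x hx; simp only [mem_sdiff] at hx
    simp only [mem_inter, mem_sdiff]; tauto)]
  congr 1
  ext x; have hx := @hT x
  simp only [mem_sdiff, mem_union, mem_inter]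
  tauto


instance : IsProbabilityMeasure ((volume : Measure ℝ).restrict (Set.Icc 0 1)) := by
  constructor; simp [Real.volume_Icc]

instance (n : ℕ) : IsProbabilityMeasure (unifCube n) := by
  unfold unifCube; infer_instance

lemma unifCube_eq (n : ℕ) : unifCube n = (volume : Measure (Fin n → I01)) := rfl

lemma key_int (n : ℕ) (z : Fin n → ℝ) (T U : Finset (Fin n)) :
    ∫ y, ∏ i : Fin n, (if i ∈ U then (if i ∈ T then z i else y i) else 1) ∂unifCube n
      = (∏ i ∈ U ∩ T, z i) * (1/2 : ℝ)^((U \ T).card) := by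
  have H := integral_fintype_prod_eq_prod (mE := fun _ => MeasureSpace.toMeasurableSpace) (μ := fun _ => (volume : Measure I01))
    (fun i (x : I01) => (if i ∈ U then (if i ∈ T then z i else x) else 1 : ℝ))
  rw [show (∫ y, ∏ i : Fin n, (if i ∈ U then (if i ∈ T then z i else y i) else 1) ∂unifCube n)
      = ∏ i, ∫ x : I01, (if i ∈ U then (if i ∈ T then z i else x) else 1 : ℝ) from H]
  have h : ∀ i : Fin n, (∫ x : I01, (if i ∈ U then (if i ∈ T then z i else x) else 1 : ℝ))
      = if i ∈ U then (if i ∈ T then z i else 1/2) else 1 := by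
    intro i
    by_cases h1 : i ∈ U <;> by_cases h2 : i ∈ T <;> simp only [h1, h2, if_true, if_false]
    · simp
    · exact int_id
    · simp
    · simp
  rw [Finset.prod_congr rfl (fun i _ => h i), Finset.prod_ite_mem, Finset.univ_inter,
    Finset.prod_ite, Finset.filter_mem_eq_inter, Finset.prod_const, ← Finset.sdiff_eq_filter]



noncomputable def Bcoef {n : ℕ} (m : Finset (Fin n) → ℝ) (S : Finset (Fin n)) : ℝ :=
  ∑ U : Finset (Fin n), (if S ⊆ U then m U * (1/2 : ℝ)^((U \ S).card) else 0)

lemma inner_int {n : ℕ} (m : Finset (Fin n) → ℝ) (z : Fin n → ℝ) (T : Finset (Fin n)) :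
    ∫ y, fOw m (fun i => if i ∈ T then z i else y i) ∂unifCube n
      = ∑ U : Finset (Fin n), m U * ((∏ i ∈ U ∩ T, z i) * (1/2 : ℝ)^((U \ T).card)) := by
  have hrw : ∀ y : Fin n → ℝ, fOw m (fun i => if i ∈ T then z i else y i)
      = ∑ U : Finset (Fin n), m U * ∏ i : Fin n,
          (if i ∈ U then (if i ∈ T then z i else y i) else 1) := by
    intro y; unfold fOw
    refine Finset.sum_congr rfl fun U _ => ?_
    rw [Finset.prod_ite_mem, Finset.univ_inter]
  simp_rw [hrw]
  rw [integral_finset_sum]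
  · exact Finset.sum_congr rfl fun U _ => by rw [MeasureTheory.integral_const_mul, key_int]
  · intro U _
    have : Integrable (fun x : Fin n → I01 => ∏ i,
        (fun i (t : I01) => (if i ∈ U then (if i ∈ T then z i else t) else 1 : ℝ)) i (x i))
        volume := by
      refine Integrable.fintype_prod (μ := fun _ => (volume : Measure I01))
        (f := fun i (t : I01) => (if i ∈ U then (if i ∈ T then z i else t) else 1 : ℝ))
        fun i => ?_
      refine cont_integrable _ ?_
      by_cases h1 : i ∈ U <;> by_cases h2 : i ∈ T <;> simp only [h1, h2, if_true, if_false]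
      · exact continuous_const
      · exact continuous_id
      · exact continuous_const
      · exact continuous_const
    exact this.const_mul (m U)

lemma anova_fOw {n : ℕ} (m : Finset (Fin n) → ℝ) (S : Finset (Fin n)) (z : Fin n → ℝ) :
    anova (fOw m) S z = Bcoef m S * ∏ i ∈ S, (z i - 1/2) := by
  unfold anova
  simp_rw [inner_int m z, Finset.mul_sum]
  rw [Finset.sum_comm]
  unfold Bcoef
  rw [Finset.sum_mul]
  refine Finset.sum_congr rfl fun U _ => ?_
  have step : ∀ T ∈ S.powerset,
      (-1:ℝ)^((S\T).card) * (m U * ((∏ i ∈ U ∩ T, z i) * (1/2 : ℝ)^((U\T).card)))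
      = (m U * (1/2:ℝ)^((U\S).card)) *
        ((∏ i ∈ T, (if i ∈ U then z i else 1)) *
          ∏ i ∈ S\T, (if i ∈ U then (-(1/2):ℝ) else -1)) := by
    intro T hT; rw [Finset.mem_powerset] at hT
    have h1 : ∏ i ∈ T, (if i ∈ U then z i else 1) = ∏ i ∈ U ∩ T, z i := by
      rw [Finset.prod_ite_mem, Finset.inter_comm]
    have h2 : ∏ i ∈ S\T, (if i ∈ U then (-(1/2):ℝ) else -1)
        = (-1:ℝ)^((S\T).card) * (1/2:ℝ)^(((S\T) ∩ U).card) := by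
      have hpt : ∀ i, (if i ∈ U then (-(1/2):ℝ) else -1)
          = (-1) * (if i ∈ U then (1/2:ℝ) else 1) := by
        intro i; by_cases h : i ∈ U <;> simp [h]
      rw [Finset.prod_congr rfl fun i _ => hpt i, Finset.prod_mul_distrib, Finset.prod_const,
        prod_ite_pow]
    rw [h1, h2, card_split U hT, pow_add]
    ring
  rw [Finset.sum_congr rfl step, ← Finset.mul_sum, ← Finset.prod_add]
  by_cases hSU : S ⊆ U
  · rw [if_pos hSU]
    have : ∀ i ∈ S, ((if i ∈ U then z i else 1) + (if i ∈ U then (-(1/2):ℝ) else -1))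
        = z i - 1/2 := by
      intro i hi; rw [if_pos (hSU hi), if_pos (hSU hi)]; ring
    rw [Finset.prod_congr rfl this]
  · rw [if_neg hSU, zero_mul]
    obtain ⟨i, hiS, hiU⟩ := Finset.not_subset.mp hSU
    rw [Finset.prod_eq_zero hiS (by rw [if_neg hiU, if_neg hiU]; ring), mul_zero]



lemma cK {n : ℕ} (S K : Finset (Fin n)) :
    (∑ U : Finset (Fin n),
      (if S ⊆ U ∧ K ⊆ U then (1/2:ℝ)^((U\S).card) * (-1:ℝ)^((U\K).card) else 0))
    = (-1:ℝ)^((S\K).card) * (1/2:ℝ)^(n - S.card) := by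
  have hterm : ∀ U : Finset (Fin n),
      (if S ⊆ U ∧ K ⊆ U then (1/2:ℝ)^((U\S).card) * (-1:ℝ)^((U\K).card) else 0)
      = (∏ i ∈ U, ((if i ∈ S then (1:ℝ) else 1/2) * (if i ∈ K then 1 else -1))) *
        ∏ i ∈ univ \ U, (if i ∈ S ∨ i ∈ K then (0:ℝ) else 1) := by
    intro U
    by_cases h : S ⊆ U ∧ K ⊆ U
    · rw [if_pos h]
      have hb : ∏ i ∈ univ \ U, (if i ∈ S ∨ i ∈ K then (0:ℝ) else 1) = 1 := by
        refine Finset.prod_eq_one fun i hi => ?_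
        simp only [mem_sdiff, mem_univ, true_and] at hi
        rw [if_neg]
        intro hc; rcases hc with hc | hc
        · exact hi (h.1 hc)
        · exact hi (h.2 hc)
      rw [hb, mul_one, Finset.prod_mul_distrib, prod_ite_pow', prod_ite_pow']
    · rw [if_neg h]
      have : ∃ i, (i ∈ S ∨ i ∈ K) ∧ i ∉ U := by
        by_contra hc; push_neg at hc
        exact h ⟨fun x hx => hc x (Or.inl hx), fun x hx => hc x (Or.inr hx)⟩
      obtain ⟨i, hi1, hi2⟩ := this
      have hz : (∏ i ∈ univ \ U, (if i ∈ S ∨ i ∈ K then (0:ℝ) else 1)) = 0 :=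
        Finset.prod_eq_zero (show i ∈ univ \ U by simp [hi2]) (if_pos hi1)
      rw [hz, mul_zero]
  rw [← Finset.powerset_univ, Finset.sum_congr rfl fun U _ => hterm U, ← Finset.prod_add]
  have hpt : ∀ i : Fin n,
      ((if i ∈ S then (1:ℝ) else 1/2) * (if i ∈ K then 1 else -1)
        + (if i ∈ S ∨ i ∈ K then (0:ℝ) else 1))
      = (if i ∈ S \ K then (-1:ℝ) else 1) * (if i ∈ S then 1 else 1/2) := by
    intro i
    by_cases h1 : i ∈ S <;> by_cases h2 : i ∈ K <;> simp [h1, h2] <;> norm_num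
  rw [Finset.prod_congr rfl fun i _ => hpt i, Finset.prod_mul_distrib, prod_ite_pow,
    prod_ite_pow', Finset.univ_inter, ← Finset.compl_eq_univ_sdiff, Finset.card_compl,
    Fintype.card_fin]

lemma Bcoef_mobius {n : ℕ} (μ : Finset (Fin n) → ℝ) (S : Finset (Fin n)) :
    Bcoef (mobius μ) S = (-1:ℝ)^S.card * 2^S.card * fourierT μ S := by
  have hs : S.card ≤ n := by
    simpa using Finset.card_le_univ S
  unfold Bcoef
  have h1 : ∀ U : Finset (Fin n),
      (if S ⊆ U then mobius μ U * (1/2:ℝ)^((U\S).card) else 0)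
      = ∑ K : Finset (Fin n),
          (if S ⊆ U ∧ K ⊆ U then (1/2:ℝ)^((U\S).card) * (-1:ℝ)^((U\K).card) else 0) * μ K := by
    intro U
    by_cases hSU : S ⊆ U
    · rw [if_pos hSU]
      unfold mobius
      rw [Finset.sum_mul, show U.powerset = Finset.univ.filter (· ⊆ U) by ext K; simp,
        Finset.sum_filter]
      refine Finset.sum_congr rfl fun K _ => ?_
      by_cases hKU : K ⊆ U
      · rw [if_pos hKU, if_pos ⟨hSU, hKU⟩]; ring
      · rw [if_neg hKU, if_neg (by tauto), zero_mul]
    · rw [if_neg hSU, eq_comm]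
      exact Finset.sum_eq_zero fun K _ => by rw [if_neg (by tauto), zero_mul]
  rw [Finset.sum_congr rfl fun U _ => h1 U, Finset.sum_comm]
  have h2 : ∀ K : Finset (Fin n),
      (∑ U : Finset (Fin n),
        (if S ⊆ U ∧ K ⊆ U then (1/2:ℝ)^((U\S).card) * (-1:ℝ)^((U\K).card) else 0) * μ K)
      = ((-1:ℝ)^((S\K).card) * (1/2:ℝ)^(n - S.card)) * μ K := by
    intro K; rw [← Finset.sum_mul, cK]
  rw [Finset.sum_congr rfl fun K _ => h2 K]
  unfold fourierT
  rw [Finset.mul_sum, Finset.mul_sum]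
  refine Finset.sum_congr rfl fun K _ => ?_
  have ha := Finset.card_inter_add_card_sdiff S K
  have hone : ((-1:ℝ))^((S ∩ K).card) * (-1)^((S ∩ K).card) = 1 := by
    rw [← mul_pow]; norm_num
  have hsign : (-1:ℝ)^((S\K).card) = (-1)^S.card * (-1)^((S ∩ K).card) := by
    calc (-1:ℝ)^((S\K).card)
        = (((-1:ℝ))^((S ∩ K).card) * (-1)^((S ∩ K).card)) * (-1)^((S\K).card) := by
          rw [hone, one_mul]
      _ = ((-1)^((S ∩ K).card) * (-1)^((S\K).card)) * (-1)^((S ∩ K).card) := by ring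
      _ = (-1:ℝ)^S.card * (-1)^((S ∩ K).card) := by rw [← pow_add, ha]
  have hconst : ((1:ℝ)/2)^(n - S.card) = 2^S.card * (1/2^n) := by
    have hsplit : (2:ℝ)^n = 2^(n - S.card) * 2^S.card := by
      rw [← pow_add, Nat.sub_add_cancel hs]
    rw [one_div, inv_pow, hsplit]
    have h1 : ((2:ℝ))^(n - S.card) ≠ 0 := by positivity
    have h2 : ((2:ℝ))^S.card ≠ 0 := by positivity
    field_simp
  rw [hsign, hconst]
  ring
/-- Theorem 1 (Sobol' index formula): the nonnormalized Sobol' index of a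
nonempty `S` for the multilinear extension of a capacity is `(1/3^{|S|}) μ̂(S)²`. -/
theorem sobol_fOw (n : ℕ) (μ : Finset (Fin n) → ℝ) (hμ : Capacity μ)
    (S : Finset (Fin n)) (hS : S.Nonempty) :
    (∫ z, (anova (fOw (mobius μ)) S z) ^ 2 ∂unifCube n) =
      (1 / 3 ^ S.card : ℝ) * (fourierT μ S) ^ 2 := by
  have hrw : ∀ z : Fin n → ℝ, (anova (fOw (mobius μ)) S z) ^ 2
      = (Bcoef (mobius μ) S)^2 * ∏ i : Fin n, (if i ∈ S then (z i - 1/2)^2 else 1) := by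
    intro z
    rw [anova_fOw, mul_pow, Finset.prod_ite_mem, Finset.univ_inter, ← Finset.prod_pow]
  simp_rw [hrw]
  rw [MeasureTheory.integral_const_mul]
  have hvar : (∫ z, ∏ i : Fin n, (if i ∈ S then (z i - 1/2)^2 else 1 : ℝ) ∂unifCube n)
      = (1/12:ℝ)^S.card := by
    have H := integral_fintype_prod_eq_prod (mE := fun _ => MeasureSpace.toMeasurableSpace) (μ := fun _ => (volume : Measure I01))
      (fun i (x : I01) => (if i ∈ S then (fun t : ℝ => (t - 1/2)^2) x else 1 : ℝ))
    rw [show (∫ z, ∏ i : Fin n, (if i ∈ S then (z i - 1/2)^2 else 1 : ℝ) ∂unifCube n)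
        = ∏ i, ∫ x : I01, (if i ∈ S then (fun t : ℝ => (t - 1/2)^2) x else 1 : ℝ) from H]
    have h : ∀ i : Fin n, (∫ x : I01, (if i ∈ S then (fun t : ℝ => (t - 1/2)^2) x else 1 : ℝ))
        = if i ∈ S then (1/12:ℝ) else 1 := by
      intro i
      by_cases hi : i ∈ S <;> simp only [hi, if_true, if_false]
      · exact int_sq
      · simp
    rw [Finset.prod_congr rfl fun i _ => h i, prod_ite_pow, Finset.univ_inter]
  rw [hvar, Bcoef_mobius]
  have hs1 : (((-1:ℝ))^S.card)^2 = 1 := by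
    rw [← pow_mul, mul_comm, pow_mul]; norm_num
  rw [mul_pow, mul_pow, hs1, one_mul]
  have h4 : ((2:ℝ)^S.card)^2 * (1/12:ℝ)^S.card = (1 / 3 ^ S.card : ℝ) := by
    rw [← pow_mul, mul_comm S.card 2, pow_mul, ← mul_pow]
    norm_num
    rw [← inv_pow]
    norm_num
  rw [← h4]; ring
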